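/- Every algebraic complete OML is completely hereditarily atomic: if L is a complete OML in which every element is the supremum of the compact elements below it, then every complete subalgebra of L is atomic. -/

import Mathlib

/-- A complete orthomodular lattice. -/
class CompleteOML (α : Type*) extends CompleteLattice α, Compl α where
  compl_compl : ∀ x : α, xᶜᶜ = x
  compl_antitone : ∀ x y : α, x ≤ y → yᶜ ≤ xᶜ
  inf_compl : ∀ x : α, x ⊓ xᶜ = ⊥
  sup_compl : ∀ x : α, x ⊔ xᶜ = ⊤
  orthomodular : ∀ x y : α, x ≤ y → x ⊔ (xᶜ ⊓ y) = y

/-- A complete lattice is algebraic (compactly generated) if every element is the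
supremum of the compact elements below it. -/
def IsAlgebraicLattice (α : Type*) [CompleteLattice α] : Prop :=
  ∀ x : α, x = sSup {c : α | IsCompactElement c ∧ c ≤ x}

/-- A complete subalgebra of a complete OML. -/
def CompleteSubalgebra {α : Type*} [CompleteLattice α] [Compl α] (S : Set α) : Prop :=
  (∀ x ∈ S, xᶜ ∈ S) ∧ (∀ T : Set α, T ⊆ S → sSup T ∈ S) ∧ (∀ T : Set α, T ⊆ S → sInf T ∈ S)

/-- A subset `S` (as a poset with least element `⊥`) is atomic. -/
def AtomicSubset {α : Type*} [CompleteLattice α] (S : Set α) : Prop :=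
  ∀ x ∈ S, x ≠ ⊥ → ∃ a ∈ S, a ≠ ⊥ ∧ (∀ s ∈ S, ¬ (⊥ < s ∧ s < a)) ∧ a ≤ x

section Lemmas

variable {α : Type*} [CompleteOML α]

lemma CompleteOML.le_of_compl_le {x y : α} (h : xᶜ ≤ yᶜ) : y ≤ x := by
  have := CompleteOML.compl_antitone _ _ h
  rwa [CompleteOML.compl_compl, CompleteOML.compl_compl] at this

lemma CompleteOML.demorgan (x y : α) : (x ⊔ y)ᶜ = xᶜ ⊓ yᶜ := by
  apply le_antisymm
  · exact le_inf (CompleteOML.compl_antitone _ _ le_sup_left)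
      (CompleteOML.compl_antitone _ _ le_sup_right)
  · apply CompleteOML.le_of_compl_le
    rw [CompleteOML.compl_compl]
    exact sup_le (CompleteOML.le_of_compl_le (by rw [CompleteOML.compl_compl]; exact inf_le_left))
      (CompleteOML.le_of_compl_le (by rw [CompleteOML.compl_compl]; exact inf_le_right))

/-- If `z ≤ mᶜ` then `mᶜ ⊓ (m ⊔ z) = z`. -/
lemma CompleteOML.compl_inf_sup {m z : α} (h : z ≤ mᶜ) : mᶜ ⊓ (m ⊔ z) = z := by
  set w := mᶜ ⊓ (m ⊔ z) with hw
  have hzw : z ≤ w := le_inf h le_sup_right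
  have hzero : zᶜ ⊓ w = ⊥ := by
    apply le_antisymm _ bot_le
    have h1 : zᶜ ⊓ w ≤ (m ⊔ z)ᶜ ⊓ (m ⊔ z) := by
      rw [CompleteOML.demorgan]
      exact le_inf (le_inf (inf_le_of_right_le inf_le_left) inf_le_left)
        (inf_le_of_right_le inf_le_right)
    calc zᶜ ⊓ w ≤ (m ⊔ z)ᶜ ⊓ (m ⊔ z) := h1
      _ = (m ⊔ z) ⊓ (m ⊔ z)ᶜ := inf_comm _ _
      _ = ⊥ := CompleteOML.inf_compl _
  have := CompleteOML.orthomodular z w hzw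
  rw [hzero, sup_bot_eq] at this
  exact this.symm

end Lemmas

/-- every algebraic complete OML is completely hereditarily atomic. -/
theorem algebraic_completeOML_completelyHereditarilyAtomic {α : Type*} [CompleteOML α]
    (halg : IsAlgebraicLattice α) :
    ∀ S : Set α, CompleteSubalgebra S → AtomicSubset S := by
  intro S hS x hxS hx
  obtain ⟨hScompl, hSsup, hSinf⟩ := hS
  have hbotS : (⊥ : α) ∈ S := by
    have := hSsup ∅ (by simp)
    rwa [sSup_empty] at this
  have hsupS : ∀ a ∈ S, ∀ b ∈ S, a ⊔ b ∈ S := fun a ha b hb => by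
    have := hSsup {a, b} (by intro y hy; rcases hy with rfl | rfl <;> assumption)
    rwa [sSup_pair] at this
  have hinfS : ∀ a ∈ S, ∀ b ∈ S, a ⊓ b ∈ S := fun a ha b hb => by
    have := hSinf {a, b} (by intro y hy; rcases hy with rfl | rfl <;> assumption)
    rwa [sInf_pair] at this
  -- get a nonzero compact element below x
  obtain ⟨c, hcpt, hcx, hcne⟩ :
      ∃ c : α, IsCompactElement c ∧ c ≤ x ∧ c ≠ ⊥ := by
    by_contra h
    push_neg at h
    apply hx
    apply le_bot_iff.mp
    have : {c : α | IsCompactElement c ∧ c ≤ x} ⊆ {(⊥ : α)} := by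
      intro c ⟨h1, h2⟩
      simp [h c h1 h2]
    calc x = sSup {c : α | IsCompactElement c ∧ c ≤ x} := halg x
      _ ≤ sSup {(⊥ : α)} := sSup_le_sSup this
      _ = ⊥ := by simp
  -- Zorn: maximal element of S below x not above c
  set P : Set α := {s | s ∈ S ∧ s ≤ x ∧ ¬ c ≤ s} with hP
  obtain ⟨m, hmP, hmmax⟩ : ∃ m, Maximal (· ∈ P) m := by
    apply zorn_le₀
    intro ch hchP hch
    rcases ch.eq_empty_or_nonempty with rfl | hne
    · exact ⟨⊥, ⟨hbotS, bot_le, fun hle => hcne (le_antisymm (le_trans hle le_rfl) bot_le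
        ▸ le_bot_iff.mp hle)⟩, by simp⟩
    · refine ⟨sSup ch, ⟨hSsup ch (fun y hy => (hchP hy).1), sSup_le fun y hy => (hchP hy).2.1,
        ?_⟩, fun z hz => le_sSup hz⟩
      intro hle
      obtain ⟨y, hy, hcy⟩ := (CompleteLattice.isCompactElement_iff_le_of_directed_sSup_le α c).mp
        hcpt ch hne (hch.directedOn) hle
      exact (hchP hy).2.2 hcy
  obtain ⟨hmS, hmx, hcm⟩ := hmP
  -- the atom
  set a : α := mᶜ ⊓ x with ha
  have haS : a ∈ S := hinfS _ (hScompl m hmS) _ hxS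
  have hax : a ≤ x := inf_le_right
  have hane : a ≠ ⊥ := by
    intro h
    have := CompleteOML.orthomodular m x hmx
    rw [← ha, h, sup_bot_eq] at this
    exact hcm (this ▸ hcx)
  refine ⟨a, haS, hane, ?_, hax⟩
  rintro s hsS ⟨hs0, hsa⟩
  -- key claim: for u ∈ S with ⊥ < u ≤ a we have c ≤ m ⊔ u
  have key : ∀ u ∈ S, u ≠ ⊥ → u ≤ a → c ≤ m ⊔ u := by
    intro u huS hune hua
    by_contra hnc
    have humc : u ≤ mᶜ := le_trans hua inf_le_left
    have hmem : m ⊔ u ∈ P :=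
      ⟨hsupS _ hmS _ huS, sup_le hmx (le_trans hua hax), hnc⟩
    have := hmmax hmem le_sup_left
    have hum : u ≤ m := le_trans le_sup_right this
    have : u ≤ m ⊓ mᶜ := le_inf hum humc
    rw [CompleteOML.inf_compl] at this
    exact hune (le_bot_iff.mp this)
  -- the complementary piece t
  set t : α := sᶜ ⊓ a with ht
  have htS : t ∈ S := hinfS _ (hScompl s hsS) _ haS
  have hst : s ⊔ t = a := CompleteOML.orthomodular s a hsa.le
  have htne : t ≠ ⊥ := by
    intro h
    rw [h, sup_bot_eq] at hst
    exact hsa.ne hst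
  have hta : t ≤ a := inf_le_right
  have hsmc : s ≤ mᶜ := le_trans hsa.le inf_le_left
  have htmc : t ≤ mᶜ := le_trans hta inf_le_left
  have hc1 : c ≤ m ⊔ s := key s hsS hs0.ne' hsa.le
  have hc2 : c ≤ m ⊔ t := key t htS htne hta
  -- now (m ⊔ s) ⊓ (m ⊔ t) = m
  set w : α := (m ⊔ s) ⊓ (m ⊔ t) with hw
  have hmw : m ≤ w := le_inf le_sup_left le_sup_left
  have hwzero : mᶜ ⊓ w = ⊥ := by
    apply le_antisymm _ bot_le
    have h1 : mᶜ ⊓ w ≤ s := by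
      rw [← CompleteOML.compl_inf_sup hsmc]
      exact inf_le_inf_left _ inf_le_left
    have h2 : mᶜ ⊓ w ≤ t := by
      rw [← CompleteOML.compl_inf_sup htmc]
      exact inf_le_inf_left _ inf_le_right
    have : mᶜ ⊓ w ≤ s ⊓ sᶜ := le_inf h1 (le_trans h2 inf_le_left)
    rwa [CompleteOML.inf_compl] at this
  have hwm : w = m := by
    have := CompleteOML.orthomodular m w hmw
    rw [hwzero, sup_bot_eq] at this
    exact this.symm
  exact hcm (le_trans (le_inf hc1 hc2) hwm.le)
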